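/- If a tree T has branching-ruin number b < 1, then RT(T, ψ_{RC}) < 1 almost surely for i.i.d. positive conductances (regardless of the tail exponent), where ψ_{RC} is the ratio function of partial sums of inverse conductances. -/

import Mathlib

open MeasureTheory ProbabilityTheory Finset ENNReal

/-- An abstract infinite, locally finite, rooted tree, described through its set of
edges `E`, the generation `gen e` (distance of the far endpoint of `e` from the root)
and the parent map on edges. -/
structure CKTree where
  E : Type
  gen : E → ℕ
  gen_pos : ∀ e, 1 ≤ gen e
  parent : E → E
  parent_gen : ∀ e, 1 < gen e → gen (parent e) + 1 = gen e
  locally_finite : ∀ n, {e | gen e = n}.Finite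
  infinite : Infinite E

namespace CKTree

/-- `g ≤ e` : `g` lies on the path from the root to `e`. -/
def ple (T : CKTree) (g e : T.E) : Prop := ∃ k < T.gen e, T.parent^[k] e = g

/-- A ray in the tree: an infinite self-avoiding path started at the root. -/
def IsRay (T : CKTree) (r : ℕ → T.E) : Prop :=
  (∀ k, T.gen (r k) = k + 1) ∧ ∀ k, T.parent (r (k + 1)) = r k

/-- A cutset: a set of edges crossed exactly once by every ray. -/
def IsCutset (T : CKTree) (π : Finset T.E) : Prop :=
  ∀ r : ℕ → T.E, T.IsRay r → ∃! k, r k ∈ π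

/-- The product of `ψ` over the edges of the path from the root to `e`. -/
noncomputable def pathProd (T : CKTree) (ψ : T.E → ℝ) (e : T.E) : ℝ :=
  ∏ k ∈ Finset.range (T.gen e), ψ (T.parent^[k] e)

/-- The infimum over cutsets of the cutset sums of `f`. -/
noncomputable def cutInf (T : CKTree) (f : T.E → ℝ) : ℝ :=
  sInf ((fun π : Finset T.E => ∑ e ∈ π, f e) '' {π | T.IsCutset π})

/-- The branching number of the tree. -/
noncomputable def br (T : CKTree) : ℝ≥0∞ :=
  sSup {x : ℝ≥0∞ | ∃ γ : ℝ, 0 < γ ∧ x = ENNReal.ofReal γ ∧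
    0 < T.cutInf (fun e => γ ^ (-(T.gen e : ℝ)))}

/-- The branching-ruin number of the tree. -/
noncomputable def brr (T : CKTree) : ℝ≥0∞ :=
  sSup {x : ℝ≥0∞ | ∃ γ : ℝ, 0 < γ ∧ x = ENNReal.ofReal γ ∧
    0 < T.cutInf (fun e => (T.gen e : ℝ) ^ (-γ))}

/-- The quantity `RT(T, ψ)`. -/
noncomputable def RT (T : CKTree) (ψ : T.E → ℝ) : ℝ≥0∞ :=
  sSup {x : ℝ≥0∞ | ∃ γ : ℝ, 0 < γ ∧ x = ENNReal.ofReal γ ∧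
    0 < T.cutInf (fun e => T.pathProd ψ e ^ γ)}

lemma gen_iterate (T : CKTree) (e : T.E) :
    ∀ k, k < T.gen e → T.gen (T.parent^[k] e) + k = T.gen e := by
  intro k
  induction k with
  | zero => simp
  | succ k ih =>
    intro hk
    have hk' : k < T.gen e := Nat.lt_of_succ_lt hk
    have h1 := ih hk'
    have h2 : 1 < T.gen (T.parent^[k] e) := by omega
    have h3 := T.parent_gen _ h2
    rw [Function.iterate_succ_apply']
    omega

lemma iterate_inj (T : CKTree) (e : T.E) {k l : ℕ} (hk : k < T.gen e) (hl : l < T.gen e)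
    (h : T.parent^[k] e = T.parent^[l] e) : k = l := by
  have h1 := T.gen_iterate e k hk
  have h2 := T.gen_iterate e l hl
  rw [h] at h1; omega

lemma isCutset_level_one (T : CKTree) : T.IsCutset (T.locally_finite 1).toFinset := by
  intro r hr
  refine ⟨0, ?_, ?_⟩
  · simp only [Set.Finite.mem_toFinset, Set.mem_setOf_eq]
    exact hr.1 0
  · intro k hk
    simp only [Set.Finite.mem_toFinset, Set.mem_setOf_eq] at hk
    have := hr.1 k
    omega

lemma countable_E (T : CKTree) : Countable T.E := by
  rw [← Set.countable_univ_iff]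
  have h : (Set.univ : Set T.E) ⊆ ⋃ n, {e | T.gen e = n} :=
    fun e _ => Set.mem_iUnion.2 ⟨T.gen e, rfl⟩
  exact ((Set.countable_iUnion fun n => (T.locally_finite n).countable).mono h)


end CKTree
/-- The quantity `RT(T, ψ_RC)` of a random-conductance environment `c`. -/
noncomputable def RTrc (T : CKTree) (c : T.E → ℝ) : ℝ≥0∞ :=
  sSup {x : ℝ≥0∞ | ∃ γ : ℝ, 0 < γ ∧ x = ENNReal.ofReal γ ∧
    0 < T.cutInf (fun e =>
      (∑ k ∈ Finset.range (T.gen e), (c (T.parent^[k] e))⁻¹) ^ (-γ))}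

lemma meas_eq_one_of_ae {Ω : Type} [MeasurableSpace Ω] (μ : Measure Ω) [IsProbabilityMeasure μ]
    {S : Set Ω} (h : ∀ᵐ ω ∂μ, ω ∈ S) : μ S = 1 := by
  have h0 : μ Sᶜ = 0 := by
    rw [ae_iff] at h
    simpa [Set.compl_def] using h
  have h1 := measure_union_le (μ := μ) S Sᶜ
  rw [Set.union_compl_self, measure_univ, h0, add_zero] at h1
  exact le_antisymm prob_le_one h1

set_option maxHeartbeats 1000000 in
lemma aux_calc_bound {q α s : ℝ} (hq0 : 0 < q) (hq1 : q < 1) (hα0 : 0 < α) (hα1 : α < 1)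
    (hs0 : 0 < s) (hs1 : s ≤ 1) :
    ∃ K : ℝ, 0 < K ∧ ∀ m : ℕ, 1 ≤ m → Real.exp ((m : ℝ) ^ α) * q ^ m ≤ K * (m : ℝ) ^ (-s) := by
  set r : ℝ := -Real.log q with hr
  have hr0 : 0 < r := by
    have := Real.log_neg hq0 hq1
    simp only [hr]; linarith
  set β : ℝ := max α (1/2) with hβ
  have hβ0 : 0 < β := lt_max_of_lt_right one_half_pos
  have hβ1 : β < 1 := max_lt hα1 (by norm_num)
  set c : ℝ := (3 / r) ^ (1 / (1 - β)) with hc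
  have hc0 : 0 < c := Real.rpow_pos_of_pos (by positivity) _
  set x₀ : ℝ := max 1 c with hx₀
  have hx₀1 : (1:ℝ) ≤ x₀ := le_max_left _ _
  refine ⟨Real.exp (3 * x₀), Real.exp_pos _, ?_⟩
  intro m hm
  set x : ℝ := (m : ℝ) with hxdef
  have hx1 : (1:ℝ) ≤ x := by simp only [hxdef, Nat.one_le_cast]; exact hm
  have hx0 : (0:ℝ) < x := lt_of_lt_of_le one_pos hx1
  have hqm : q ^ m = Real.exp (x * Real.log q) := by
    rw [← Real.rpow_natCast q m, Real.rpow_def_of_pos hq0]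
    ring_nf
    rfl
  have hxs : x ^ (-s) = Real.exp (-(s * Real.log x)) := by
    rw [Real.rpow_def_of_pos hx0]; ring_nf
  rw [hqm, hxs, ← Real.exp_add, ← Real.exp_add, Real.exp_le_exp]
  -- goal : x ^ α + x * log q ≤ 3 * x₀ + -(s * log x)
  have h1 : x ^ α ≤ x ^ β := Real.rpow_le_rpow_of_exponent_le hx1 (le_max_left _ _)
  have hlogx0 : 0 ≤ Real.log x := Real.log_nonneg hx1
  have hlog : Real.log x ≤ 2 * x ^ β := by
    have l1 : Real.log (x ^ ((1:ℝ)/2)) = (1/2) * Real.log x := Real.log_rpow hx0 _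
    have l2 : Real.log (x ^ ((1:ℝ)/2)) ≤ x ^ ((1:ℝ)/2) := by
      have := Real.log_le_sub_one_of_pos (Real.rpow_pos_of_pos hx0 ((1:ℝ)/2))
      linarith
    have l3 : x ^ ((1:ℝ)/2) ≤ x ^ β := Real.rpow_le_rpow_of_exponent_le hx1 (le_max_right _ _)
    linarith
  have hslog : s * Real.log x ≤ 2 * x ^ β := by
    nlinarith
  have hxlogq : x * Real.log q = -(r * x) := by simp only [hr]; ring
  rw [hxlogq]
  have hmain : 3 * x ^ β - r * x ≤ 3 * x₀ := by
    rcases le_or_gt x₀ x with h | h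
    · have hxc : c ≤ x := le_trans (le_max_right 1 c) h
      have hxb1 : x ^ (β - 1) ≤ c ^ (β - 1) :=
        Real.rpow_le_rpow_of_nonpos hc0 hxc (by linarith)
      have hceq : c ^ (β - 1) = r / 3 := by
        rw [hc, ← Real.rpow_mul (by positivity)]
        have hβne : 1 - β ≠ 0 := by linarith
        have he : (1 / (1 - β)) * (β - 1) = -1 := by
          field_simp
          ring
        rw [he, Real.rpow_neg_one]
        field_simp
      have hxβ : x ^ β = x ^ (β - 1) * x := by
        rw [← Real.rpow_add_one hx0.ne' (β - 1)]
        congr 1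
        ring
      have h3 : 3 * x ^ β ≤ r * x := by
        rw [hxβ]
        rw [hceq] at hxb1
        nlinarith [mul_le_mul_of_nonneg_right hxb1 hx0.le]
      linarith
    · have h1' : x ^ β ≤ x₀ ^ β := Real.rpow_le_rpow hx0.le h.le hβ0.le
      have h2' : x₀ ^ β ≤ x₀ := by
        calc x₀ ^ β ≤ x₀ ^ (1:ℝ) := Real.rpow_le_rpow_of_exponent_le hx₀1 hβ1.le
        _ = x₀ := Real.rpow_one _
      nlinarith [mul_pos hr0 hx0]
  linarith

/-- If `br_r(T) = b < 1`, then for any i.i.d. positive conductances (regardless of tail),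
almost surely `RT(T, ψ_RC) < 1`. -/
theorem RTrc_lt_one_of_brr_lt_one (T : CKTree) {Ω : Type} [MeasurableSpace Ω]
    (μ : Measure Ω) [IsProbabilityMeasure μ] (C : T.E → Ω → ℝ) (b : ℝ)
    (hmeas : ∀ e, Measurable (C e))
    (hindep : iIndepFun C μ)
    (hident : ∀ e e', IdentDistrib (C e) (C e') μ μ)
    (hpos : ∀ e, ∀ᵐ ω ∂μ, 0 < C e ω)
    (hbrr : T.brr = ENNReal.ofReal b) (hb0 : 0 ≤ b) (hb1 : b < 1) :
    μ {ω | RTrc T (fun e => C e ω) < 1} = 1 := by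
  classical
  have hcount : Countable T.E := T.countable_E
  -- constants
  set δ : ℝ := (1 - b) / 4 with hδdef
  have hδ0 : 0 < δ := by simp only [hδdef]; linarith
  have hδ1 : δ < 1 := by simp only [hδdef]; linarith
  set s : ℝ := b + δ with hsdef
  have hs0 : 0 < s := by simp only [hsdef]; linarith
  have hs1 : s < 1 := by simp only [hsdef, hδdef]; linarith
  set α : ℝ := s / (1 - δ) with hαdef
  have h1δ0 : 0 < 1 - δ := by linarith
  have hα0 : 0 < α := div_pos hs0 h1δ0
  have hα1δ : α < 1 - δ := by
    rw [hαdef, div_lt_iff₀ h1δ0]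
    simp only [hsdef, hδdef]
    nlinarith
  have hα1 : α < 1 := by linarith
  have hαs : α * (1 - δ) = s := by
    rw [hαdef]; field_simp
  -- the inverse conductances
  set X : T.E → Ω → ℝ := fun g ω => (C g ω)⁻¹ with hXdef
  have hXmeas : ∀ g, Measurable (X g) := fun g => (hmeas g).inv
  have hXindep : iIndepFun X μ :=
    hindep.comp (fun _ => Inv.inv) (fun _ => measurable_inv)
  obtain ⟨e₀⟩ : Nonempty T.E := @Infinite.nonempty _ T.infinite
  have hXint : ∀ g : T.E, Integrable (fun ω => Real.exp (-1 * X g ω)) μ := by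
    intro g
    refine Integrable.mono' (integrable_const 1) ?_ ?_
    · exact (((hXmeas g).const_mul (-1)).exp).aestronglyMeasurable
    · filter_upwards [hpos g] with ω h
      rw [Real.norm_eq_abs, abs_of_pos (Real.exp_pos _), Real.exp_le_one_iff]
      have : 0 < X g ω := inv_pos.2 h
      linarith
  set q : ℝ := mgf (X e₀) μ (-1) with hqdef
  have hq_eq : ∀ g, mgf (X g) μ (-1) = q := by
    intro g
    have hid : IdentDistrib (X g) (X e₀) μ μ := (hident g e₀).comp measurable_inv
    have hid2 : IdentDistrib (fun ω => Real.exp (-1 * X g ω))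
        (fun ω => Real.exp (-1 * X e₀ ω)) μ μ := by
      have := hid.comp (u := fun y : ℝ => Real.exp (-1 * y))
        ((measurable_id.const_mul (-1)).exp)
      simpa [Function.comp_def] using this
    have hieq := hid2.integral_eq
    rw [hqdef]
    simp only [mgf]
    simpa using hieq
  have hq0 : 0 < q := mgf_pos (hXint e₀)
  have hq1 : q < 1 := by
    have hint1 : Integrable (fun ω => (1 : ℝ) - Real.exp (-1 * X e₀ ω)) μ :=
      (integrable_const 1).sub (hXint e₀)
    have hfnonneg : 0 ≤ᵐ[μ] fun ω => (1 : ℝ) - Real.exp (-1 * X e₀ ω) := by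
      filter_upwards [hpos e₀] with ω h
      have : 0 < X e₀ ω := inv_pos.2 h
      have := Real.exp_lt_one_iff.2 (by linarith : -1 * X e₀ ω < 0)
      simp only [Pi.zero_apply]
      linarith
    have hsupp : ∀ᵐ ω ∂μ, ω ∈ Function.support fun ω => (1 : ℝ) - Real.exp (-1 * X e₀ ω) := by
      filter_upwards [hpos e₀] with ω h
      have : 0 < X e₀ ω := inv_pos.2 h
      have := Real.exp_lt_one_iff.2 (by linarith : -1 * X e₀ ω < 0)
      simp only [Function.mem_support]
      intro hc
      nlinarith
    have hpossupp : 0 < μ (Function.support fun ω => (1 : ℝ) - Real.exp (-1 * X e₀ ω)) := by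
      rw [meas_eq_one_of_ae μ hsupp]; norm_num
    have hpint : 0 < ∫ ω, ((1 : ℝ) - Real.exp (-1 * X e₀ ω)) ∂μ :=
      (integral_pos_iff_support_of_nonneg_ae hfnonneg hint1).2 hpossupp
    have : ∫ ω, ((1 : ℝ) - Real.exp (-1 * X e₀ ω)) ∂μ
        = 1 - ∫ ω, Real.exp (-1 * X e₀ ω) ∂μ := by
      rw [integral_sub (integrable_const 1) (hXint e₀)]
      simp
    rw [this] at hpint
    have hqint : q = ∫ ω, Real.exp (-1 * X e₀ ω) ∂μ := by simp [hqdef, mgf]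
    rw [hqint]
    linarith
  obtain ⟨K, hK0, hK⟩ := aux_calc_bound hq0 hq1 hα0 hα1 hs0 hs1.le
  -- partial sums along paths
  set S : T.E → Ω → ℝ := fun e ω => ∑ k ∈ Finset.range (T.gen e), X (T.parent^[k] e) ω with hSdef
  have hposall : ∀ᵐ ω ∂μ, ∀ g, 0 < C g ω := ae_all_iff.2 hpos
  have hSmeas : ∀ e, Measurable (S e) := fun e =>
    Finset.measurable_sum _ fun k _ => hXmeas _
  have hSint : ∀ e, Integrable (fun ω => Real.exp (-1 * S e ω)) μ := by
    intro e
    refine Integrable.mono' (integrable_const 1) ?_ ?_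
    · exact (((hSmeas e).const_mul (-1)).exp).aestronglyMeasurable
    · filter_upwards [hposall] with ω h
      rw [Real.norm_eq_abs, abs_of_pos (Real.exp_pos _), Real.exp_le_one_iff]
      have hS0 : 0 ≤ S e ω :=
        Finset.sum_nonneg fun k _ => (inv_pos.2 (h _)).le
      linarith
  -- Chernoff bound per edge
  have hchern : ∀ e : T.E,
      μ {ω | S e ω ≤ ((T.gen e : ℝ)) ^ α} ≤ ENNReal.ofReal (K * (T.gen e : ℝ) ^ (-s)) := by
    intro e
    have hn1 : 1 ≤ T.gen e := T.gen_pos e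
    have hmgfS : mgf (S e) μ (-1) = q ^ T.gen e := by
      set a : ℕ → T.E := fun k => T.parent^[k] e with hadef
      set A : Finset T.E := (Finset.range (T.gen e)).image a with hAdef
      have hinj : ∀ x ∈ Finset.range (T.gen e), ∀ y ∈ Finset.range (T.gen e),
          a x = a y → x = y := fun x hx y hy hxy =>
        T.iterate_inj e (Finset.mem_range.1 hx) (Finset.mem_range.1 hy) hxy
      have hSsum : S e = ∑ g ∈ A, X g := by
        funext ω
        rw [Finset.sum_apply, hAdef, Finset.sum_image hinj]
      rw [hSsum, hXindep.mgf_sum hXmeas A,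
        Finset.prod_congr rfl (fun g _ => hq_eq g), Finset.prod_const]
      congr 1
      rw [hAdef, Finset.card_image_of_injOn fun x hx y hy h =>
        hinj x (by simpa using hx) y (by simpa using hy) h, Finset.card_range]
    have hcb := measure_le_le_exp_mul_mgf (X := S e) (μ := μ) (((T.gen e : ℝ)) ^ α)
      (by norm_num : (-1 : ℝ) ≤ 0) (hSint e)
    rw [hmgfS] at hcb
    have hcb' : (μ {ω | S e ω ≤ ((T.gen e : ℝ)) ^ α}).toReal
        ≤ Real.exp (((T.gen e : ℝ)) ^ α) * q ^ T.gen e := by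
      simpa [measureReal_def] using hcb
    calc μ {ω | S e ω ≤ ((T.gen e : ℝ)) ^ α}
        = ENNReal.ofReal (μ {ω | S e ω ≤ ((T.gen e : ℝ)) ^ α}).toReal := by
          rw [ENNReal.ofReal_toReal (measure_ne_top μ _)]
      _ ≤ ENNReal.ofReal (K * (T.gen e : ℝ) ^ (-s)) :=
          ENNReal.ofReal_le_ofReal (hcb'.trans (hK _ hn1))
  -- choice of cutsets
  have hπ1 : T.IsCutset (T.locally_finite 1).toFinset := T.isCutset_level_one
  have himg_ne : ((fun π : Finset T.E => ∑ e ∈ π, ((T.gen e : ℝ)) ^ (-s)) ''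
      {π | T.IsCutset π}).Nonempty := ⟨_, ⟨_, hπ1, rfl⟩⟩
  have hci_le : T.cutInf (fun e => ((T.gen e : ℝ)) ^ (-s)) ≤ 0 := by
    by_contra hcon
    push_neg at hcon
    have hmem : ENNReal.ofReal s ∈ {x : ℝ≥0∞ | ∃ γ : ℝ, 0 < γ ∧ x = ENNReal.ofReal γ ∧
        0 < T.cutInf (fun e => (T.gen e : ℝ) ^ (-γ))} := ⟨s, hs0, rfl, hcon⟩
    have hle := le_sSup hmem
    have hbrr' : sSup {x : ℝ≥0∞ | ∃ γ : ℝ, 0 < γ ∧ x = ENNReal.ofReal γ ∧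
        0 < T.cutInf (fun e => (T.gen e : ℝ) ^ (-γ))} = ENNReal.ofReal b := hbrr
    rw [hbrr'] at hle
    have := (ENNReal.ofReal_le_ofReal_iff hb0).1 hle
    simp only [hsdef] at this
    linarith
  have hπn : ∀ n : ℕ, ∃ π : Finset T.E, T.IsCutset π ∧
      ∑ e ∈ π, ((T.gen e : ℝ)) ^ (-s) < (1 / 2) ^ n := by
    intro n
    have h2 : (0 : ℝ) < (1 / 2) ^ n := by positivity
    have hlt : sInf ((fun π : Finset T.E => ∑ e ∈ π, ((T.gen e : ℝ)) ^ (-s)) ''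
        {π | T.IsCutset π}) < (1 / 2) ^ n := lt_of_le_of_lt hci_le h2
    obtain ⟨y, ⟨π, hπ, rfl⟩, hy⟩ := exists_lt_of_csInf_lt himg_ne hlt
    exact ⟨π, hπ, hy⟩
  choose π hπcut hπsum using hπn
  -- bad events and Borel–Cantelli
  set A : ℕ → Set Ω := fun n => ⋃ e ∈ π n, {ω | S e ω ≤ ((T.gen e : ℝ)) ^ α} with hAdef
  have hAle : ∀ n, μ (A n) ≤ ENNReal.ofReal (K * (1 / 2) ^ n) := by
    intro n
    calc μ (A n) ≤ ∑ e ∈ π n, μ {ω | S e ω ≤ ((T.gen e : ℝ)) ^ α} :=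
          measure_biUnion_finset_le _ _
      _ ≤ ∑ e ∈ π n, ENNReal.ofReal (K * (T.gen e : ℝ) ^ (-s)) :=
          Finset.sum_le_sum fun e _ => hchern e
      _ = ENNReal.ofReal (∑ e ∈ π n, K * (T.gen e : ℝ) ^ (-s)) :=
          (ENNReal.ofReal_sum_of_nonneg fun e _ => by positivity).symm
      _ ≤ ENNReal.ofReal (K * (1 / 2) ^ n) := by
          refine ENNReal.ofReal_le_ofReal ?_
          rw [← Finset.mul_sum]
          exact mul_le_mul_of_nonneg_left (hπsum n).le hK0.le
  have hAsum : (∑' n, μ (A n)) ≠ ∞ := by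
    refine ne_top_of_le_ne_top ?_ (ENNReal.tsum_le_tsum hAle)
    have heq : ∀ n : ℕ, ENNReal.ofReal (K * (1 / 2) ^ n)
        = ENNReal.ofReal K * (ENNReal.ofReal (1 / 2)) ^ n := by
      intro n
      rw [ENNReal.ofReal_mul hK0.le, ENNReal.ofReal_pow (by norm_num)]
    rw [tsum_congr heq, ENNReal.tsum_mul_left, ENNReal.tsum_geometric]
    refine ENNReal.mul_ne_top ENNReal.ofReal_ne_top ?_
    rw [Ne, ENNReal.inv_eq_top, tsub_eq_zero_iff_le]
    intro hcon
    have : ENNReal.ofReal (1 / 2) < 1 := by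
      rw [ENNReal.ofReal_lt_one]; norm_num
    exact absurd hcon (not_le.2 this)
  -- almost sure conclusion
  have hae : ∀ᵐ ω ∂μ, RTrc T (fun e => C e ω) < 1 := by
    filter_upwards [ae_eventually_notMem hAsum, hposall] with ω hω hpω
    obtain ⟨N, hN⟩ := Filter.eventually_atTop.1 hω
    have h1δlt : ENNReal.ofReal (1 - δ) < 1 := by
      rw [ENNReal.ofReal_lt_one]; linarith
    refine lt_of_le_of_lt (sSup_le ?_) h1δlt
    rintro x ⟨γ, hγ0, rfl, hcγ⟩
    rcases le_or_gt γ (1 - δ) with hγ | hγ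
    · exact ENNReal.ofReal_le_ofReal hγ
    exfalso
    have hfun : (fun e => (∑ k ∈ Finset.range (T.gen e),
        ((fun e => C e ω) (T.parent^[k] e))⁻¹) ^ (-γ)) = fun e => (S e ω) ^ (-γ) := rfl
    rw [hfun] at hcγ
    obtain ⟨n₀, hn₀⟩ := exists_pow_lt_of_lt_one hcγ (by norm_num : (1 / 2 : ℝ) < 1)
    set n := max n₀ N with hndef
    have hωn : ω ∉ A n := hN n (le_max_right _ _)
    have hsmall : ((1 : ℝ) / 2) ^ n ≤ (1 / 2) ^ n₀ :=
      pow_le_pow_of_le_one (by norm_num) (by norm_num) (le_max_left _ _)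
    have hedge : ∀ e ∈ π n, (S e ω) ^ (-γ) ≤ ((T.gen e : ℝ)) ^ (-s) := by
      intro e he
      have hSgt : ((T.gen e : ℝ)) ^ α < S e ω := by
        by_contra hle
        push_neg at hle
        exact hωn (by
          simp only [hAdef, Set.mem_iUnion, Set.mem_setOf_eq]
          exact ⟨e, he, hle⟩)
      have hgen1 : (1 : ℝ) ≤ (T.gen e : ℝ) := by exact_mod_cast T.gen_pos e
      have hgα1 : (1 : ℝ) ≤ ((T.gen e : ℝ)) ^ α := Real.one_le_rpow hgen1 hα0.le
      have hS1 : (1 : ℝ) ≤ S e ω := le_trans hgα1 hSgt.le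
      calc (S e ω) ^ (-γ) ≤ (S e ω) ^ (-(1 - δ)) :=
            Real.rpow_le_rpow_of_exponent_le hS1 (by linarith)
        _ ≤ (((T.gen e : ℝ)) ^ α) ^ (-(1 - δ)) :=
            Real.rpow_le_rpow_of_nonpos (by positivity) hSgt.le (by linarith)
        _ = ((T.gen e : ℝ)) ^ (-s) := by
            rw [← Real.rpow_mul (by positivity : (0:ℝ) ≤ (T.gen e : ℝ))]
            congr 1
            rw [← hαs]; ring
    have hBdd : BddBelow ((fun π : Finset T.E => ∑ e ∈ π, (S e ω) ^ (-γ)) ''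
        {π | T.IsCutset π}) := by
      refine ⟨0, ?_⟩
      rintro y ⟨π', _, rfl⟩
      exact Finset.sum_nonneg fun e _ =>
        Real.rpow_nonneg (Finset.sum_nonneg fun k _ => (inv_pos.2 (hpω _)).le) _
    have hle1 : T.cutInf (fun e => (S e ω) ^ (-γ)) ≤ ∑ e ∈ π n, (S e ω) ^ (-γ) :=
      csInf_le hBdd ⟨π n, hπcut n, rfl⟩
    have hle2 : ∑ e ∈ π n, (S e ω) ^ (-γ) ≤ ∑ e ∈ π n, ((T.gen e : ℝ)) ^ (-s) :=
      Finset.sum_le_sum hedge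
    have h3 := hπsum n
    linarith
  exact meas_eq_one_of_ae μ hae
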